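/- Let n ≥ 2 and let p : {1,…,n} → ℂ be an injective map. Among all trees T on the vertex set {1,…,n} (connected acyclic simple graphs) consider the total Euclidean length L(T) = ∑_{{a,b} ∈ E(T)} |p(a) − p(b)|, and let T be a tree minimizing L. Then the edges of T, realized as straight segments in the plane, have pairwise disjoint interiors: for any two distinct edges {a, b} and {c, d} of T, the open segments joining p(a) to p(b) and joining p(c) to p(d) are disjoint. -/

import Mathlib

/-- The Euclidean length of an edge (an unordered pair of vertices) under a planar
embedding `p` of the vertices. -/
noncomputable def edgeLength {n : ℕ} (p : Fin n → ℂ) : Sym2 (Fin n) → ℝ :=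
  Sym2.lift ⟨fun a b => dist (p a) (p b), fun a b => dist_comm (p a) (p b)⟩


namespace SSTE

lemma dist_aux {t : ℝ} (ht : 0 ≤ t) (z w : ℂ) : dist (t • z) (t • w) = t * dist z w := by
  rw [dist_eq_norm, ← smul_sub, norm_smul, Real.norm_eq_abs, abs_of_nonneg ht, dist_eq_norm]

/-- Key crossing lemma: if `X` is interior to segments `AB` and `CD` and `C ≠ B`,
then one of the two "usable" swaps strictly improves. -/
lemma cross_lemma {A B C D X : ℂ} (hAB : A ≠ B) (hCB : C ≠ B)
    (h1 : X ∈ openSegment ℝ A B) (h2 : X ∈ openSegment ℝ C D) :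
    dist A C < dist A B ∨ dist B D < dist C D := by
  by_contra hcon
  push_neg at hcon
  obtain ⟨g1, g2⟩ := hcon
  rw [openSegment_eq_image] at h1 h2
  obtain ⟨t, ht, hXt⟩ := h1
  obtain ⟨s, hs, hXs⟩ := h2
  dsimp only at hXt hXs
  obtain ⟨ht0, ht1⟩ := ht
  obtain ⟨hs0, hs1⟩ := hs
  have dAB : (0:ℝ) < dist A B := dist_pos.mpr hAB
  have dAX : dist A X = t * dist A B := by
    rw [← hXt, dist_eq_norm]
    have : A - ((1 - t) • A + t • B) = t • (A - B) := by
      simp [smul_sub, sub_smul, Complex.real_smul]; ring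
    rw [this, norm_smul, Real.norm_eq_abs, abs_of_pos ht0, ← dist_eq_norm]
  have dXB : dist X B = (1 - t) * dist A B := by
    rw [← hXt, dist_eq_norm]
    have : ((1 - t) • A + t • B) - B = (1 - t) • (A - B) := by
      simp [smul_sub, sub_smul, Complex.real_smul]; ring
    rw [this, norm_smul, Real.norm_eq_abs, abs_of_pos (by linarith), ← dist_eq_norm]
  have dCX : dist C X = s * dist C D := by
    rw [← hXs, dist_eq_norm]
    have : C - ((1 - s) • C + s • D) = s • (C - D) := by
      simp [smul_sub, sub_smul, Complex.real_smul]; ring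
    rw [this, norm_smul, Real.norm_eq_abs, abs_of_pos hs0, ← dist_eq_norm]
  have dXD : dist X D = (1 - s) * dist C D := by
    rw [← hXs, dist_eq_norm]
    have : ((1 - s) • C + s • D) - D = (1 - s) • (C - D) := by
      simp [smul_sub, sub_smul, Complex.real_smul]; ring
    rw [this, norm_smul, Real.norm_eq_abs, abs_of_pos (by linarith), ← dist_eq_norm]
  have tri1 : dist A C ≤ dist A X + dist X C := dist_triangle _ _ _
  have tri2 : dist B D ≤ dist B X + dist X D := dist_triangle _ _ _
  have hcomm1 : dist X C = dist C X := dist_comm _ _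
  have hcomm2 : dist B X = dist X B := dist_comm _ _
  have hXC_eq : dist X C = (1 - t) * dist A B := by
    have h5 : (1 - t) * dist A B ≤ dist X C := by linarith
    have h6 : dist X C ≤ (1 - t) * dist A B := by linarith
    linarith
  have hAC_eq : dist A C = dist A B := by linarith
  have hkey : X = AffineMap.lineMap A C t :=
    eq_lineMap_of_dist_eq_mul_of_dist_eq_mul (by rw [hAC_eq]; exact dAX)
      (by rw [hAC_eq]; exact hXC_eq)
  rw [AffineMap.lineMap_apply_module] at hkey
  have hBC : t • C = t • B := by
    have h7 : (1 - t) • A + t • B = (1 - t) • A + t • C := by rw [hXt, hkey]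
    exact (add_left_cancel h7).symm
  exact hCB (smul_right_injective ℂ (ne_of_gt ht0) hBC)

/-- Shared-vertex crossing lemma. -/
lemma shared_lemma {A B D X : ℂ} (hAB : A ≠ B) (hAD : A ≠ D)
    (h1 : X ∈ openSegment ℝ A B) (h2 : X ∈ openSegment ℝ B D) :
    dist A D < dist A B ∨ dist A D < dist B D := by
  rw [openSegment_eq_image] at h1 h2
  obtain ⟨t, ⟨ht0, ht1⟩, hXt⟩ := h1
  obtain ⟨s, ⟨hs0, hs1⟩, hXs⟩ := h2
  dsimp only at hXt hXs
  have key : ((1 - t : ℝ) : ℂ) * (A - B) = ((s : ℝ) : ℂ) * (D - B) := by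
    have h3 : (1 - t) • (A - B) = s • (D - B) := by
      have e1 : X - B = (1 - t) • (A - B) := by
        rw [← hXt]; simp [smul_sub, sub_smul, Complex.real_smul]; ring
      have e2 : X - B = s • (D - B) := by
        rw [← hXs]; simp [smul_sub, sub_smul, Complex.real_smul]; ring
      rw [← e1, e2]
    simpa [Complex.real_smul] using h3
  have hs0' : ((s : ℝ) : ℂ) ≠ 0 := by exact_mod_cast ne_of_gt hs0
  set l : ℝ := (1 - t) / s with hl
  have hl0 : 0 < l := div_pos (by linarith) hs0
  have hDB : D - B = (l : ℂ) * (A - B) := by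
    rw [hl]
    push_cast at key ⊢
    field_simp
    linear_combination -key
  have hAD' : A - D = ((1 - l : ℝ) : ℂ) * (A - B) := by
    have : A - D = (A - B) - (D - B) := by ring
    rw [this, hDB]; push_cast; ring
  have nAB : dist A B = ‖A - B‖ := dist_eq_norm _ _
  have nAD : dist A D = |1 - l| * ‖A - B‖ := by
    rw [dist_eq_norm, hAD', norm_mul, Complex.norm_real, Real.norm_eq_abs]
  have nBD : dist B D = l * ‖A - B‖ := by
    rw [dist_comm, dist_eq_norm, hDB, norm_mul, Complex.norm_real, Real.norm_eq_abs,
      abs_of_pos hl0]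
  have hABpos : (0:ℝ) < ‖A - B‖ := by
    rw [← dist_eq_norm]; exact dist_pos.mpr hAB
  have hlne1 : l ≠ 1 := by
    intro h
    apply hAD
    have : A - D = 0 := by rw [hAD', h]; push_cast; ring
    linear_combination this
  rcases lt_or_gt_of_ne hlne1 with hlt | hgt
  · left
    rw [nAD, nAB, abs_of_pos (by linarith : (0:ℝ) < 1 - l)]
    nlinarith
  · right
    rw [nAD, nBD, abs_of_neg (by linarith : 1 - l < 0)]
    nlinarith

end SSTE


namespace SSTE
open SimpleGraph

variable {V : Type*}

/-- Auxiliary statement closed under walk recursion. -/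
lemma reach_side_aux {T : SimpleGraph V} (u v : V) :
    ∀ {w z : V}, T.Walk w z →
      ((T \ fromEdgeSet {s(u, v)}).Reachable w z ∨
        ((T \ fromEdgeSet {s(u, v)}).Reachable w u ∧
          (T \ fromEdgeSet {s(u, v)}).Reachable z v) ∨
        ((T \ fromEdgeSet {s(u, v)}).Reachable w v ∧
          (T \ fromEdgeSet {s(u, v)}).Reachable z u)) := by
  intro w z W
  induction W with
  | nil => exact Or.inl (Reachable.refl _)
  | @cons w x z h q ih =>
    by_cases he : s(w, x) = s(u, v)
    · rw [Sym2.eq_iff] at he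
      rcases he with ⟨rfl, rfl⟩ | ⟨rfl, rfl⟩
      · -- w = u, x = v
        rcases ih with h1 | ⟨h1, h2⟩ | ⟨h1, h2⟩
        · exact Or.inr (Or.inl ⟨Reachable.refl _, h1.symm⟩)
        · exact Or.inr (Or.inl ⟨Reachable.refl _, h2⟩)
        · exact Or.inl h2.symm
      · -- w = v, x = u
        rcases ih with h1 | ⟨h1, h2⟩ | ⟨h1, h2⟩
        · exact Or.inr (Or.inr ⟨Reachable.refl _, h1.symm⟩)
        · exact Or.inl h2.symm
        · exact Or.inr (Or.inr ⟨Reachable.refl _, h2⟩)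
    · have hadj : (T \ fromEdgeSet {s(u, v)}).Adj w x := by
        rw [sdiff_adj, fromEdgeSet_adj]
        exact ⟨h, by simp [he]⟩
      rcases ih with h1 | ⟨h1, h2⟩ | ⟨h1, h2⟩
      · exact Or.inl (hadj.reachable.trans h1)
      · exact Or.inr (Or.inl ⟨hadj.reachable.trans h1, h2⟩)
      · exact Or.inr (Or.inr ⟨hadj.reachable.trans h1, h2⟩)

/-- After deleting one edge of a connected graph, every vertex can still reach
one of the two endpoints of the deleted edge. -/
lemma reach_side {T : SimpleGraph V} {u v w : V} (W : T.Walk w u) :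
    (T \ fromEdgeSet {s(u, v)}).Reachable w u ∨
      (T \ fromEdgeSet {s(u, v)}).Reachable w v := by
  rcases reach_side_aux u v W with h1 | ⟨h1, h2⟩ | ⟨h1, h2⟩
  · exact Or.inl h1
  · exact Or.inl h1
  · exact Or.inr h1

/-- Exchanging an edge of a tree for a new edge joining the two components
of the deleted edge yields a tree. -/
lemma tree_swap (T : SimpleGraph V) (hT : T.IsTree) {u v x y : V}
    (he : T.Adj u v) (hxy : x ≠ y)
    (hsep : ¬(T \ fromEdgeSet {s(u, v)}).Reachable x y) :
    ∃ G : SimpleGraph V, G.IsTree ∧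
      G.edgeSet = insert s(x, y) (T.edgeSet \ {s(u, v)}) := by
  classical
  set H := T \ fromEdgeSet {s(u, v)} with hH
  set G := H ⊔ fromEdgeSet {s(x, y)} with hG
  have hHle : H ≤ G := le_sup_left
  have hedge : G.edgeSet = insert s(x, y) (T.edgeSet \ {s(u, v)}) := by
    rw [hG, edgeSet_sup, hH, edgeSet_sdiff, edgeSet_fromEdgeSet,
      edgeSet_sdiff_sdiff_isDiag, edgeSet_fromEdgeSet]
    ext z
    simp only [Set.mem_union, Set.mem_diff, Set.mem_insert_iff, Set.mem_singleton_iff,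
      Set.mem_setOf_eq]
    constructor
    · rintro (hz | ⟨rfl, -⟩)
      · exact Or.inr hz
      · exact Or.inl rfl
    · rintro (rfl | hz)
      · exact Or.inr ⟨rfl, by simp [Sym2.isDiag_iff_proj_eq, hxy]⟩
      · exact Or.inl hz
  refine ⟨G, ⟨?_, ?_⟩, hedge⟩
  · -- connected
    have hGxy : G.Adj x y := by
      apply le_sup_right (b := fromEdgeSet {s(x, y)}) ?_
      rw [fromEdgeSet_adj]; exact ⟨rfl, hxy⟩
    have hside : ∀ w : V, H.Reachable w u ∨ H.Reachable w v := by
      intro w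
      obtain ⟨W⟩ := hT.isConnected.preconnected w u
      exact reach_side W
    have hbridge : ¬H.Reachable u v := by
      have := (isAcyclic_iff_forall_adj_isBridge.mp hT.IsAcyclic) he
      exact isBridge_iff.mp this
    -- x and y are on different sides
    have hxy_sides : (H.Reachable x u ∧ H.Reachable y v) ∨
        (H.Reachable x v ∧ H.Reachable y u) := by
      rcases hside x with hx | hx <;> rcases hside y with hy | hy
      · exact absurd (hx.trans hy.symm) hsep
      · exact Or.inl ⟨hx, hy⟩
      · exact Or.inr ⟨hx, hy⟩
      · exact absurd (hx.trans hy.symm) hsep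
    have huv : G.Reachable u v := by
      rcases hxy_sides with ⟨hx, hy⟩ | ⟨hx, hy⟩
      · exact (hx.mono hHle).symm.trans ((hGxy.reachable).trans (hy.mono hHle))
      · exact (hy.mono hHle).symm.trans ((hGxy.symm.reachable).trans (hx.mono hHle))
    have hall : ∀ w : V, G.Reachable w u := by
      intro w
      rcases hside w with hw | hw
      · exact hw.mono hHle
      · exact (hw.mono hHle).trans huv.symm
    haveI : Nonempty V := ⟨u⟩
    exact SimpleGraph.Connected.mk (fun w w' => (hall w).trans (hall w').symm)
  · -- acyclic
    intro w c hc
    by_cases hm : s(x, y) ∈ c.edges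
    · have h1 : G.Adj x y ∧ (G \ fromEdgeSet {s(x, y)}).Reachable x y :=
        adj_and_reachable_delete_edges_iff_exists_cycle.mpr ⟨w, c, hc, hm⟩
      have h2 : (G \ fromEdgeSet {s(x, y)}) ≤ H := by
        intro a b hab
        rw [sdiff_adj] at hab
        rcases (sup_adj _ _ _ _).mp hab.1 with h3 | h3
        · exact h3
        · exact absurd h3 hab.2
      exact hsep (h1.2.mono h2)
    · have hsub : ∀ e ∈ c.edges, e ∈ T.edgeSet := by
        intro e hec
        have heG : e ∈ G.edgeSet := c.edges_subset_edgeSet hec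
        rw [hedge] at heG
        rcases heG with rfl | ⟨h4, -⟩
        · exact absurd hec hm
        · exact h4
      exact hT.IsAcyclic (c.transfer T hsub) (hc.transfer hsub)

end SSTE



namespace SSTE
open SimpleGraph

@[simp] lemma edgeLength_mk {n : ℕ} (p : Fin n → ℂ) (x y : Fin n) :
    edgeLength p s(x, y) = dist (p x) (p y) := rfl

/-- A strictly shorter feasible swap contradicts minimality. -/
lemma no_improve {n : ℕ} (p : Fin n → ℂ) (T : SimpleGraph (Fin n)) (hT : T.IsTree)
    (hmin : ∀ G : SimpleGraph (Fin n), G.IsTree →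
      (∑ᶠ e ∈ T.edgeSet, edgeLength p e) ≤ ∑ᶠ e ∈ G.edgeSet, edgeLength p e)
    {u v x y : Fin n} (huv : s(u, v) ∈ T.edgeSet) (hxy : x ≠ y)
    (hsep : ¬(T \ fromEdgeSet {s(u, v)}).Reachable x y)
    (hlt : dist (p x) (p y) < dist (p u) (p v)) : False := by
  classical
  obtain ⟨G, hGtree, hedge⟩ := tree_swap T hT (T.mem_edgeSet.mp huv) hxy hsep
  have hfne : s(x, y) ≠ s(u, v) := by
    intro h
    have h1 : edgeLength p s(x, y) = edgeLength p s(u, v) := by rw [h]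
    simp only [edgeLength_mk] at h1
    linarith
  have hfT : s(x, y) ∉ T.edgeSet := by
    intro h
    apply hsep
    have : (T \ fromEdgeSet {s(u, v)}).Adj x y := by
      rw [sdiff_adj, fromEdgeSet_adj]
      exact ⟨T.mem_edgeSet.mp h, by simp [hfne]⟩
    exact this.reachable
  have hTfin : T.edgeSet.Finite := Set.toFinite _
  have hGfin : G.edgeSet.Finite := Set.toFinite _
  have hsetEq : hGfin.toFinset = insert s(x, y) (hTfin.toFinset.erase s(u, v)) := by
    ext z
    simp only [Set.Finite.mem_toFinset, hedge, Set.mem_insert_iff, Set.mem_diff,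
      Set.mem_singleton_iff, Finset.mem_insert, Finset.mem_erase]
    tauto
  have hGsum : (∑ᶠ e ∈ G.edgeSet, edgeLength p e)
      = edgeLength p s(x, y) + ∑ e ∈ hTfin.toFinset.erase s(u, v), edgeLength p e := by
    rw [finsum_mem_eq_finite_toFinset_sum _ hGfin, hsetEq, Finset.sum_insert]
    simp only [Finset.mem_erase, Set.Finite.mem_toFinset]
    tauto
  have hTsum : (∑ᶠ e ∈ T.edgeSet, edgeLength p e)
      = edgeLength p s(u, v) + ∑ e ∈ hTfin.toFinset.erase s(u, v), edgeLength p e := by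
    rw [finsum_mem_eq_finite_toFinset_sum _ hTfin,
      ← Finset.add_sum_erase _ _ (hTfin.mem_toFinset.mpr huv)]
  have := hmin G hGtree
  rw [hGsum, hTsum] at this
  simp only [edgeLength_mk] at this
  linarith

/-- The shared-vertex case: two tree edges `{u₀,v₀}`, `{v₀,w₀}` whose open segments meet. -/
lemma shared_case {n : ℕ} (p : Fin n → ℂ) (hp : Function.Injective p)
    (T : SimpleGraph (Fin n)) (hT : T.IsTree)
    (hmin : ∀ G : SimpleGraph (Fin n), G.IsTree →
      (∑ᶠ e ∈ T.edgeSet, edgeLength p e) ≤ ∑ᶠ e ∈ G.edgeSet, edgeLength p e)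
    (u₀ v₀ w₀ : Fin n) (h1 : s(u₀, v₀) ∈ T.edgeSet) (h2 : s(v₀, w₀) ∈ T.edgeSet)
    (huw : u₀ ≠ w₀) (X : ℂ)
    (hX1 : X ∈ openSegment ℝ (p u₀) (p v₀)) (hX2 : X ∈ openSegment ℝ (p v₀) (p w₀)) :
    False := by
  have huv : u₀ ≠ v₀ := (T.mem_edgeSet.mp h1).ne
  have hvw : v₀ ≠ w₀ := (T.mem_edgeSet.mp h2).ne
  have hne12 : s(v₀, w₀) ≠ s(u₀, v₀) := by
    rw [Ne, Sym2.eq_iff]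
    push_neg
    exact ⟨fun _ => Ne.symm hvw, fun _ => Ne.symm huw⟩
  have hbr1 : ¬(T \ fromEdgeSet {s(u₀, v₀)}).Reachable u₀ v₀ :=
    isBridge_iff.mp ((isAcyclic_iff_forall_adj_isBridge.mp hT.2) (T.mem_edgeSet.mp h1))
  have hbr2 : ¬(T \ fromEdgeSet {s(v₀, w₀)}).Reachable v₀ w₀ :=
    isBridge_iff.mp ((isAcyclic_iff_forall_adj_isBridge.mp hT.2) (T.mem_edgeSet.mp h2))
  rcases shared_lemma (hp.ne huv) (hp.ne huw) hX1 hX2 with h | h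
  · -- remove s(u₀,v₀), add s(u₀,w₀)
    have hadj : (T \ fromEdgeSet {s(u₀, v₀)}).Adj v₀ w₀ := by
      rw [sdiff_adj, fromEdgeSet_adj]
      exact ⟨T.mem_edgeSet.mp h2, by simp [hne12]⟩
    have hsep : ¬(T \ fromEdgeSet {s(u₀, v₀)}).Reachable u₀ w₀ := fun hr =>
      hbr1 (hr.trans hadj.reachable.symm)
    exact no_improve p T hT hmin h1 huw hsep h
  · -- remove s(v₀,w₀), add s(u₀,w₀)
    have hadj : (T \ fromEdgeSet {s(v₀, w₀)}).Adj u₀ v₀ := by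
      rw [sdiff_adj, fromEdgeSet_adj]
      exact ⟨T.mem_edgeSet.mp h1, by simp [hne12.symm]⟩
    have hsep : ¬(T \ fromEdgeSet {s(v₀, w₀)}).Reachable u₀ w₀ := fun hr =>
      hbr2 (hadj.reachable.symm.trans hr)
    have hlt : dist (p u₀) (p w₀) < dist (p v₀) (p w₀) := h
    exact no_improve p T hT hmin h2 huw hsep hlt

end SSTE

/-- **Shortest spanning trees in the plane are embedded** (planar instance of the lemma
of Section 5.3 of the paper). Let `p : {1,…,n} → ℂ` be injective, and let `T` be a tree
on the vertex set `{1,…,n}` minimizing the total Euclidean length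
`∑_{{a,b} ∈ E(T)} |p(a) − p(b)|` among all trees. Then any two distinct edges of `T`,
realized as straight segments in the plane, have disjoint open interiors. -/
theorem shortest_spanning_tree_embedded
    (n : ℕ) (hn : 2 ≤ n) (p : Fin n → ℂ) (hp : Function.Injective p)
    (T : SimpleGraph (Fin n)) (hT : T.IsTree)
    (hmin : ∀ G : SimpleGraph (Fin n), G.IsTree →
      (∑ᶠ e ∈ T.edgeSet, edgeLength p e) ≤ ∑ᶠ e ∈ G.edgeSet, edgeLength p e)
    (a b c d : Fin n)
    (he₁ : s(a, b) ∈ T.edgeSet) (he₂ : s(c, d) ∈ T.edgeSet)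
    (hne : s(a, b) ≠ s(c, d)) :
    Disjoint (openSegment ℝ (p a) (p b)) (openSegment ℝ (p c) (p d)) := by
  classical
  open SimpleGraph SSTE in
  by_contra hdis
  rw [Set.not_disjoint_iff] at hdis
  obtain ⟨X, hX1, hX2⟩ := hdis
  have hab : a ≠ b := (T.mem_edgeSet.mp he₁).ne
  have hcd : c ≠ d := (T.mem_edgeSet.mp he₂).ne
  by_cases hbc : b = c
  · subst hbc
    have had : a ≠ d := by
      rintro rfl
      exact hne (Sym2.eq_swap)
    exact SSTE.shared_case p hp T hT hmin a b d he₁ he₂ had X hX1 hX2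
  by_cases hbd : b = d
  · subst hbd
    have hac : a ≠ c := by rintro rfl; exact hne rfl
    have he₂' : s(b, c) ∈ T.edgeSet := by rw [Sym2.eq_swap]; exact he₂
    apply SSTE.shared_case p hp T hT hmin a b c he₁ he₂' hac X hX1 ?_
    rw [openSegment_symm]; exact hX2
  by_cases hac : a = c
  · subst hac
    have hbd' : b ≠ d := by rintro rfl; exact hne rfl
    have he₁' : s(b, a) ∈ T.edgeSet := by rw [Sym2.eq_swap]; exact he₁
    apply SSTE.shared_case p hp T hT hmin b a d he₁' he₂ hbd' X ?_ hX2
    rw [openSegment_symm]; exact hX1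
  by_cases had : a = d
  · subst had
    have hbc' : b ≠ c := by rintro rfl; exact hne (Sym2.eq_swap)
    have he₁' : s(b, a) ∈ T.edgeSet := by rw [Sym2.eq_swap]; exact he₁
    have he₂' : s(a, c) ∈ T.edgeSet := by rw [Sym2.eq_swap]; exact he₂
    apply SSTE.shared_case p hp T hT hmin b a c he₁' he₂' hbc' X ?_ ?_
    · rw [openSegment_symm]; exact hX1
    · rw [openSegment_symm]; exact hX2
  -- all four vertices distinct
  have hbr1 : ¬(T \ SimpleGraph.fromEdgeSet {s(a, b)}).Reachable a b :=
    SimpleGraph.isBridge_iff.mp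
      ((SimpleGraph.isAcyclic_iff_forall_adj_isBridge.mp hT.2) (T.mem_edgeSet.mp he₁))
  have hbr2 : ¬(T \ SimpleGraph.fromEdgeSet {s(c, d)}).Reachable c d :=
    SimpleGraph.isBridge_iff.mp
      ((SimpleGraph.isAcyclic_iff_forall_adj_isBridge.mp hT.2) (T.mem_edgeSet.mp he₂))
  have hcd1 : (T \ SimpleGraph.fromEdgeSet {s(a, b)}).Reachable c d := by
    refine SimpleGraph.Adj.reachable ?_
    rw [SimpleGraph.sdiff_adj, SimpleGraph.fromEdgeSet_adj]
    exact ⟨T.mem_edgeSet.mp he₂, by simp [Ne.symm hne]⟩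
  have hab2 : (T \ SimpleGraph.fromEdgeSet {s(c, d)}).Reachable a b := by
    refine SimpleGraph.Adj.reachable ?_
    rw [SimpleGraph.sdiff_adj, SimpleGraph.fromEdgeSet_adj]
    exact ⟨T.mem_edgeSet.mp he₁, by simp [hne]⟩
  obtain ⟨W1⟩ := hT.isConnected.preconnected c a
  obtain ⟨W2⟩ := hT.isConnected.preconnected a c
  rcases SSTE.reach_side (v := b) W1 with hc1 | hc1
  · rcases SSTE.reach_side (v := d) W2 with ha2 | ha2
    · -- c ~ a  and  a ~ c : variant (B,A,C,D)
      have hX1' : X ∈ openSegment ℝ (p b) (p a) := by rw [openSegment_symm]; exact hX1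
      rcases SSTE.cross_lemma (hp.ne (Ne.symm hab)) (hp.ne (Ne.symm hac)) hX1' hX2 with h | h
      · have hsep : ¬(T \ SimpleGraph.fromEdgeSet {s(a, b)}).Reachable b c := fun hr =>
          hbr1 (hr.trans hc1).symm
        have hlt : dist (p b) (p c) < dist (p a) (p b) := by
          rwa [dist_comm (p b) (p a)] at h
        exact SSTE.no_improve p T hT hmin he₁ hbc hsep hlt
      · have hsep : ¬(T \ SimpleGraph.fromEdgeSet {s(c, d)}).Reachable a d := fun hr =>
          hbr2 (ha2.symm.trans hr)
        exact SSTE.no_improve p T hT hmin he₂ had hsep h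
    · -- c ~ a  and  a ~ d : variant (B,A,D,C)
      have hX1' : X ∈ openSegment ℝ (p b) (p a) := by rw [openSegment_symm]; exact hX1
      have hX2' : X ∈ openSegment ℝ (p d) (p c) := by rw [openSegment_symm]; exact hX2
      rcases SSTE.cross_lemma (hp.ne (Ne.symm hab)) (hp.ne (Ne.symm had))
          hX1' hX2' with h | h
      · have hd_a : (T \ SimpleGraph.fromEdgeSet {s(a, b)}).Reachable d a :=
          hcd1.symm.trans hc1
        have hsep : ¬(T \ SimpleGraph.fromEdgeSet {s(a, b)}).Reachable b d := fun hr =>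
          hbr1 (hr.trans hd_a).symm
        have hlt : dist (p b) (p d) < dist (p a) (p b) := by
          rwa [dist_comm (p b) (p a)] at h
        exact SSTE.no_improve p T hT hmin he₁ hbd hsep hlt
      · have hsep : ¬(T \ SimpleGraph.fromEdgeSet {s(c, d)}).Reachable a c := fun hr =>
          hbr2 (hr.symm.trans ha2)
        have hlt : dist (p a) (p c) < dist (p c) (p d) := by
          rwa [dist_comm (p d) (p c)] at h
        exact SSTE.no_improve p T hT hmin he₂ hac hsep hlt
  · rcases SSTE.reach_side (v := d) W2 with ha2 | ha2
    · -- c ~ b  and  a ~ c : variant (A,B,C,D)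
      rcases SSTE.cross_lemma (hp.ne hab) (hp.ne (Ne.symm hbc)) hX1 hX2 with h | h
      · have hsep : ¬(T \ SimpleGraph.fromEdgeSet {s(a, b)}).Reachable a c := fun hr =>
          hbr1 (hr.trans hc1)
        exact SSTE.no_improve p T hT hmin he₁ hac hsep h
      · have hsep : ¬(T \ SimpleGraph.fromEdgeSet {s(c, d)}).Reachable b d := fun hr =>
          hbr2 (ha2.symm.trans (hab2.trans hr))
        exact SSTE.no_improve p T hT hmin he₂ hbd hsep h
    · -- c ~ b  and  a ~ d : variant (A,B,D,C)
      have hX2' : X ∈ openSegment ℝ (p d) (p c) := by rw [openSegment_symm]; exact hX2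
      rcases SSTE.cross_lemma (hp.ne hab) (hp.ne (Ne.symm hbd)) hX1 hX2' with h | h
      · have hd_b : (T \ SimpleGraph.fromEdgeSet {s(a, b)}).Reachable d b :=
          hcd1.symm.trans hc1
        have hsep : ¬(T \ SimpleGraph.fromEdgeSet {s(a, b)}).Reachable a d := fun hr =>
          hbr1 (hr.trans hd_b)
        exact SSTE.no_improve p T hT hmin he₁ had hsep h
      · have hb_d : (T \ SimpleGraph.fromEdgeSet {s(c, d)}).Reachable b d :=
          hab2.symm.trans ha2
        have hsep : ¬(T \ SimpleGraph.fromEdgeSet {s(c, d)}).Reachable b c := fun hr =>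
          hbr2 (hr.symm.trans hb_d)
        have hlt : dist (p b) (p c) < dist (p c) (p d) := by
          rwa [dist_comm (p d) (p c)] at h
        exact SSTE.no_improve p T hT hmin he₂ hbc hsep hlt
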